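/- arXiv:2203.02398 — 3 statements merged into one kernel-verified Lean document; each statement's English description precedes it below -/
import Mathlib

section
/- Let A : [0,1] → Matrix (Fin p) (Fin p) ℝ be continuous with A(s)ᵀ = −A(s) for all s (skew-symmetric values), and let Q : [0,1] → Matrix (Fin p) (Fin p) ℝ be differentiable with Q'(s) = Q(s)·A(s) for all s ∈ [0,1]. If Q(0)ᵀ·Q(0) = I and det Q(0) = 1, then for every s ∈ [0,1], Q(s)ᵀ·Q(s) = I and det Q(s) = 1; i.e., a solution of the Frenet-Serret ODE starting in SO(p) remains in SO(p). -/
open Set Matrix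

attribute [local instance] Matrix.normedAddCommGroup Matrix.normedSpace


theorem matMul_hasDerivAt {p : ℕ} {f g : ℝ → Matrix (Fin p) (Fin p) ℝ}
    {f' g' : Matrix (Fin p) (Fin p) ℝ} {t : ℝ}
    (hf : HasDerivAt f f' t) (hg : HasDerivAt g g' t) :
    HasDerivAt (fun s => f s * g s) (f' * g t + f t * g') t := by
  have h1 : ∀ i j, HasDerivAt (fun s => f s i j) (f' i j) t :=
    fun i j => hasDerivAt_pi.mp (hasDerivAt_pi.mp hf i) j
  have h2 : ∀ i j, HasDerivAt (fun s => g s i j) (g' i j) t :=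
    fun i j => hasDerivAt_pi.mp (hasDerivAt_pi.mp hg i) j
  refine hasDerivAt_pi.mpr ?_
  intro i
  rw [hasDerivAt_pi]
  intro j
  have := HasDerivAt.sum (fun k (_ : k ∈ Finset.univ) => (h1 i k).mul (h2 k j))
  convert this using 1
  · ext x; simp [Matrix.mul_apply, Finset.sum_apply]
  · rw [Matrix.add_apply, Matrix.mul_apply, Matrix.mul_apply, ← Finset.sum_add_distrib]

theorem matNorm_mul_le {p : ℕ} (M N : Matrix (Fin p) (Fin p) ℝ) :
    ‖M * N‖ ≤ p * ‖M‖ * ‖N‖ := by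
  have h0 : (0:ℝ) ≤ p * ‖M‖ * ‖N‖ := by positivity
  rw [Matrix.norm_le_iff h0]
  intro i j
  rw [Matrix.mul_apply]
  calc ‖∑ k, M i k * N k j‖ ≤ ∑ k : Fin p, ‖M i k * N k j‖ := norm_sum_le _ _
    _ ≤ ∑ k : Fin p, ‖M‖ * ‖N‖ := Finset.sum_le_sum fun k _ => by
        rw [norm_mul]
        exact mul_le_mul (Matrix.norm_entry_le_entrywise_sup_norm M)
          (Matrix.norm_entry_le_entrywise_sup_norm N) (norm_nonneg _) (norm_nonneg _)
    _ = p * ‖M‖ * ‖N‖ := by simp [mul_assoc]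

/-- A solution of the Frenet-Serret ODE `Q'(s) = Q(s)A(s)` with
skew-symmetric continuous `A` that starts in `SO(p)` remains in `SO(p)`. -/
theorem frenet_ode_stays_in_SO
    (p : ℕ)
    (A Q : ℝ → Matrix (Fin p) (Fin p) ℝ)
    (hAcont : ContinuousOn A (Icc (0 : ℝ) 1))
    (hskew : ∀ s ∈ Icc (0 : ℝ) 1, (A s)ᵀ = -A s)
    (hQ : ∀ s ∈ Icc (0 : ℝ) 1, HasDerivAt Q (Q s * A s) s)
    (hQ0orth : (Q 0)ᵀ * Q 0 = 1)
    (hQ0det : (Q 0).det = 1) :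
    ∀ s ∈ Icc (0 : ℝ) 1, (Q s)ᵀ * Q s = 1 ∧ (Q s).det = 1 := by
  obtain ⟨C, hC⟩ := isCompact_Icc.exists_bound_of_continuousOn hAcont
  set C' : ℝ := max C 0 with hC'def
  have hC'0 : (0:ℝ) ≤ C' := le_max_right _ _
  set B : ℝ → Matrix (Fin p) (Fin p) ℝ :=
    fun t => A (projIcc (0:ℝ) 1 zero_le_one t) with hBdef
  have hB : ∀ t, ‖B t‖ ≤ C' :=
    fun t => le_trans (hC _ (projIcc (0:ℝ) 1 zero_le_one t).2) (le_max_left _ _)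
  have hBI : ∀ t ∈ Icc (0:ℝ) 1, B t = A t := fun t ht => by
    simp [hBdef, projIcc_of_mem zero_le_one ht]
  set v : ℝ → Matrix (Fin p) (Fin p) ℝ → Matrix (Fin p) (Fin p) ℝ :=
    fun t x => x * B t - B t * x with hvdef
  set K : NNReal := Real.toNNReal (2 * p * C') with hKdef
  have hKcoe : (K : ℝ) = 2 * p * C' := Real.coe_toNNReal _ (by positivity)
  have hv : ∀ t, LipschitzOnWith K (v t) univ := by
    intro t
    refine (LipschitzWith.of_dist_le_mul fun x y => ?_).lipschitzOnWith
    rw [dist_eq_norm, dist_eq_norm, hKcoe]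
    have hsub : v t x - v t y = (x - y) * B t - B t * (x - y) := by
      simp only [hvdef]; noncomm_ring
    rw [hsub]
    calc ‖(x - y) * B t - B t * (x - y)‖
        ≤ ‖(x - y) * B t‖ + ‖B t * (x - y)‖ := norm_sub_le _ _
      _ ≤ p * ‖x - y‖ * ‖B t‖ + p * ‖B t‖ * ‖x - y‖ :=
          add_le_add (matNorm_mul_le _ _) (matNorm_mul_le _ _)
      _ ≤ p * ‖x - y‖ * C' + p * C' * ‖x - y‖ := by gcongr <;> exact hB t
      _ = 2 * p * C' * ‖x - y‖ := by ring
  set F : ℝ → Matrix (Fin p) (Fin p) ℝ := fun s => (Q s)ᵀ * Q s with hFdef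
  have hQT : ∀ t ∈ Icc (0:ℝ) 1, HasDerivAt (fun s => (Q s)ᵀ) (Q t * A t)ᵀ t := by
    intro t ht
    have h := hQ t ht
    refine hasDerivAt_pi.mpr ?_
    intro i
    rw [hasDerivAt_pi]
    intro j
    exact hasDerivAt_pi.mp (hasDerivAt_pi.mp h j) i
  have hF' : ∀ t ∈ Icc (0:ℝ) 1, HasDerivAt F (v t (F t)) t := by
    intro t ht
    have h := matMul_hasDerivAt (hQT t ht) (hQ t ht)
    convert h using 1
    simp only [hvdef, hFdef, hBI t ht, Matrix.transpose_mul, hskew t ht]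
    noncomm_ring
  have hFc : ContinuousOn F (Icc (0:ℝ) 1) :=
    fun t ht => ((hF' t ht).continuousAt).continuousWithinAt
  have horth : EqOn F (fun _ => (1 : Matrix (Fin p) (Fin p) ℝ)) (Icc (0:ℝ) 1) := by
    apply ODE_solution_unique_of_mem_Icc_right (v := v) (s := fun _ => univ) (fun t _ => hv t) hFc
      (fun t ht => (hF' t (Ico_subset_Icc_self ht)).hasDerivWithinAt)
      (fun _ _ => trivial) continuousOn_const ?_ (fun _ _ => trivial) ?_
    · intro t _
      have : v t 1 = 0 := by simp [hvdef]
      rw [this]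
      exact (hasDerivAt_const t _).hasDerivWithinAt
    · simpa [hFdef] using hQ0orth
  have hdet2 : ∀ s ∈ Icc (0:ℝ) 1, (Q s).det ^ 2 = 1 := by
    intro s hs
    have h1 : (F s).det = 1 := by rw [horth hs]; simp
    have : (Q s)ᵀ.det * (Q s).det = 1 := by rw [← Matrix.det_mul]; exact h1
    rw [Matrix.det_transpose] at this
    rw [sq]; exact this
  have hQc : ContinuousOn (fun s => (Q s).det) (Icc (0:ℝ) 1) := by
    have : ContinuousOn Q (Icc (0:ℝ) 1) :=
      fun t ht => (hQ t ht).continuousAt.continuousWithinAt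
    exact (Continuous.matrix_det continuous_id).comp_continuousOn this
  intro s hs
  refine ⟨horth hs, ?_⟩
  have h2 := hdet2 s hs
  rcases mul_eq_zero.mp (show ((Q s).det - 1) * ((Q s).det + 1) = 0 by ring_nf; linarith) with h | h
  · linarith
  · exfalso
    have hds : (Q s).det = -1 := by linarith
    have hsub : Icc (0:ℝ) s ⊆ Icc (0:ℝ) 1 := Icc_subset_Icc_right hs.2
    have hiv := intermediate_value_Icc' hs.1 (hQc.mono hsub)
    have h0mem : (0:ℝ) ∈ Icc ((Q s).det) ((Q 0).det) := by
      rw [hds, hQ0det]; constructor <;> norm_num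
    obtain ⟨c, hc, hc0⟩ := hiv h0mem
    have := hdet2 c (hsub hc)
    have hc0' : (Q c).det = 0 := hc0
    rw [hc0'] at this
    norm_num at this
end

section
/- Let A : [0,1] → Matrix (Fin p) (Fin p) ℝ be C¹, and let Q : [0,1] → Matrix (Fin p) (Fin p) ℝ be differentiable with Q'(s) = Q(s)·A(s) for all s ∈ [0,1]. Then there exists a constant C > 0 such that for all s, h with 0 ≤ h and s, s+h ∈ [0,1], ‖Q(s+h) − Q(s)·exp(h·A(s + h/2))‖ ≤ C·h², where exp is the matrix exponential; i.e., the midpoint Lie-Euler approximation of the flow has uniform error of order h². -/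
open Set Matrix

open Nat

section ExpRemainder

set_option maxHeartbeats 1000000 in
lemma exp_remainder_norm_aux {𝔸 : Type*} [NormedRing 𝔸] [NormedAlgebra ℝ 𝔸] [CompleteSpace 𝔸]
    (X : 𝔸) : ‖NormedSpace.exp X - 1 - X‖ ≤ ‖X‖ ^ 2 * Real.exp ‖X‖ := by
  have hs : Summable (fun n : ℕ => ((n ! : ℝ))⁻¹ • X ^ n) := NormedSpace.expSeries_summable' X
  have hs1 : Summable (fun n : ℕ => (((n+1)! : ℝ))⁻¹ • X ^ (n+1)) :=
    (summable_nat_add_iff 1).mpr hs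
  have h0 : NormedSpace.exp X - 1 - X = ∑' n : ℕ, (((n+2)! : ℝ))⁻¹ • X ^ (n+2) := by
    rw [NormedSpace.exp_eq_tsum (𝕂 := ℝ)]
    simp only []
    rw [Summable.tsum_eq_zero_add hs, Summable.tsum_eq_zero_add hs1]
    simp [Nat.factorial]
  have hterm : ∀ n : ℕ, ‖(((n+2)! : ℝ))⁻¹ • X ^ (n+2)‖ ≤ ‖X‖ ^ 2 * (‖X‖ ^ n / n !) := by
    intro n
    rw [norm_smul]
    have h1 : ‖X ^ (n+2)‖ ≤ ‖X‖ ^ (n+2) := norm_pow_le' X (by omega)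
    have h2 : (((n:ℕ) !:ℝ))⁻¹ ≥ (((n+2)! : ℝ))⁻¹ := by
      apply inv_anti₀
      · positivity
      · exact_mod_cast Nat.factorial_le (by omega)
    have h3 : ‖(((n+2)! : ℝ))⁻¹‖ = (((n+2)! : ℝ))⁻¹ := by
      rw [Real.norm_eq_abs, abs_of_nonneg]; positivity
    calc ‖(((n+2)! : ℝ))⁻¹‖ * ‖X ^ (n+2)‖ ≤ (((n:ℕ) !:ℝ))⁻¹ * ‖X‖ ^ (n+2) := by
          rw [h3]; exact mul_le_mul h2 h1 (norm_nonneg _) (by positivity)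
      _ = ‖X‖ ^ 2 * (‖X‖ ^ n / n !) := by rw [pow_add]; ring
  have hsum2 : Summable (fun n : ℕ => ‖X‖ ^ 2 * (‖X‖ ^ n / n !)) :=
    (Real.summable_pow_div_factorial ‖X‖).mul_left _
  have hnormsum : Summable (fun n : ℕ => ‖(((n+2)! : ℝ))⁻¹ • X ^ (n+2)‖) :=
    Summable.of_nonneg_of_le (fun n => norm_nonneg _) hterm hsum2
  rw [h0]
  calc ‖∑' n : ℕ, (((n+2)! : ℝ))⁻¹ • X ^ (n+2)‖ ≤ ∑' n : ℕ, ‖(((n+2)! : ℝ))⁻¹ • X ^ (n+2)‖ :=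
        norm_tsum_le_tsum_norm hnormsum
    _ ≤ ∑' n : ℕ, ‖X‖ ^ 2 * (‖X‖ ^ n / n !) := Summable.tsum_le_tsum hterm hnormsum hsum2
    _ = ‖X‖ ^ 2 * ∑' n : ℕ, (‖X‖ ^ n / n !) := tsum_mul_left
    _ = ‖X‖ ^ 2 * Real.exp ‖X‖ := by
        rw [Real.exp_eq_exp_ℝ, NormedSpace.exp_eq_tsum_div]

end ExpRemainder

section LinftyAux
attribute [local instance] Matrix.linftyOpNormedRing Matrix.linftyOpNormedAlgebra

lemma matrix_entry_le_linfty_norm {p : ℕ} (M : Matrix (Fin p) (Fin p) ℝ) (i j : Fin p) :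
    |M i j| ≤ ‖M‖ := by
  have h1 : ‖M i j‖₊ ≤ ‖M‖₊ := by
    rw [Matrix.linfty_opNNNorm_def]
    calc ‖M i j‖₊ ≤ ∑ k, ‖M i k‖₊ :=
          Finset.single_le_sum (f := fun k => ‖M i k‖₊) (fun k _ => by positivity) (Finset.mem_univ j)
      _ ≤ _ := Finset.le_sup (f := fun a => ∑ k, ‖M a k‖₊) (Finset.mem_univ i)
  calc |M i j| = ‖M i j‖ := (Real.norm_eq_abs _).symm
    _ ≤ ‖M‖ := h1

lemma matrix_linfty_norm_le {p : ℕ} (M : Matrix (Fin p) (Fin p) ℝ) (r : ℝ) (hr : 0 ≤ r)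
    (h : ∀ i j, |M i j| ≤ r) : ‖M‖ ≤ (p : ℝ) * r := by
  have key : ‖M‖₊ ≤ (p : NNReal) * r.toNNReal := by
    rw [Matrix.linfty_opNNNorm_def]
    apply Finset.sup_le
    intro i _
    calc ∑ j, ‖M i j‖₊ ≤ ∑ _j : Fin p, r.toNNReal := by
          apply Finset.sum_le_sum
          intro j _
          rw [← NNReal.coe_le_coe, coe_nnnorm, Real.coe_toNNReal r hr, Real.norm_eq_abs]
          exact h i j
      _ = (p : NNReal) * r.toNNReal := by
          simp [Finset.sum_const, nsmul_eq_mul]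
  calc ‖M‖ = ((‖M‖₊ : NNReal) : ℝ) := (coe_nnnorm _).symm
    _ ≤ (((p : NNReal) * r.toNNReal : NNReal) : ℝ) := NNReal.coe_le_coe.mpr key
    _ = (p : ℝ) * r := by push_cast [Real.coe_toNNReal r hr]; ring

lemma exp_entry_remainder_bound {p : ℕ} (X : Matrix (Fin p) (Fin p) ℝ) (r : ℝ) (hr : 0 ≤ r)
    (hX : ∀ i j, |X i j| ≤ r) (i j : Fin p) :
    |(NormedSpace.exp X - 1 - X) i j| ≤ ((p : ℝ) * r) ^ 2 * Real.exp ((p : ℝ) * r) := by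
  have h1 : ‖X‖ ≤ (p : ℝ) * r := matrix_linfty_norm_le X r hr hX
  have h2 := exp_remainder_norm_aux X
  calc |(NormedSpace.exp X - 1 - X) i j| ≤ ‖NormedSpace.exp X - 1 - X‖ :=
        matrix_entry_le_linfty_norm _ i j
    _ ≤ ‖X‖ ^ 2 * Real.exp ‖X‖ := h2
    _ ≤ ((p : ℝ) * r) ^ 2 * Real.exp ((p : ℝ) * r) := by
        apply mul_le_mul (pow_le_pow_left₀ (norm_nonneg _) h1 2)
          (Real.exp_le_exp.mpr h1) (Real.exp_pos _).le (by positivity)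

end LinftyAux

attribute [local instance] Matrix.normedAddCommGroup Matrix.normedSpace

lemma sup_norm_mul_le {p : ℕ} (X Y : Matrix (Fin p) (Fin p) ℝ) :
    ‖X * Y‖ ≤ (p : ℝ) * ‖X‖ * ‖Y‖ := by
  rw [Matrix.norm_le_iff (by positivity)]
  intro i j
  rw [Matrix.mul_apply]
  calc ‖∑ k, X i k * Y k j‖ ≤ ∑ k, ‖X i k * Y k j‖ := norm_sum_le _ _
    _ ≤ ∑ _k : Fin p, ‖X‖ * ‖Y‖ := by
        apply Finset.sum_le_sum
        intro k _
        rw [norm_mul]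
        exact mul_le_mul (norm_entry_le_entrywise_sup_norm X)
          (norm_entry_le_entrywise_sup_norm Y) (norm_nonneg _) (norm_nonneg _)
    _ = (p : ℝ) * ‖X‖ * ‖Y‖ := by
        rw [Finset.sum_const, Finset.card_univ, Fintype.card_fin, nsmul_eq_mul]; ring

noncomputable def mulCLM (p : ℕ) : Matrix (Fin p) (Fin p) ℝ →L[ℝ]
    Matrix (Fin p) (Fin p) ℝ →L[ℝ] Matrix (Fin p) (Fin p) ℝ :=
  LinearMap.mkContinuous₂ (LinearMap.mul ℝ (Matrix (Fin p) (Fin p) ℝ)) (p : ℝ)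
    (fun X Y => by simpa using sup_norm_mul_le X Y)

@[simp] lemma mulCLM_apply {p : ℕ} (X Y : Matrix (Fin p) (Fin p) ℝ) : mulCLM p X Y = X * Y := rfl

set_option maxHeartbeats 1000000 in
/-- For a C¹ coefficient `A` and a solution `Q` of
`Q'(s) = Q(s)·A(s)` on `[0,1]`, the midpoint Lie-Euler approximation of the
flow has uniform error of order `h²`:
`‖Q(s+h) − Q(s)·exp(h·A(s+h/2))‖ ≤ C·h²`. -/
theorem midpoint_lie_euler_order_two
    (p : ℕ)
    (A A' Q : ℝ → Matrix (Fin p) (Fin p) ℝ)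
    (hA : ∀ s ∈ Icc (0 : ℝ) 1, HasDerivAt A (A' s) s)
    (hA'cont : ContinuousOn A' (Icc (0 : ℝ) 1))
    (hQ : ∀ s ∈ Icc (0 : ℝ) 1, HasDerivAt Q (Q s * A s) s) :
    ∃ C > 0, ∀ s h : ℝ, 0 ≤ h → s ∈ Icc (0 : ℝ) 1 → s + h ∈ Icc (0 : ℝ) 1 →
      ‖Q (s + h) - Q s * NormedSpace.exp (h • A (s + h / 2))‖ ≤ C * h ^ 2 := by
  have hQc : ContinuousOn Q (Icc (0:ℝ) 1) :=
    fun t ht => (hQ t ht).continuousAt.continuousWithinAt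
  have hAc : ContinuousOn A (Icc (0:ℝ) 1) :=
    fun t ht => (hA t ht).continuousAt.continuousWithinAt
  obtain ⟨MQ0, hMQ0⟩ := isCompact_Icc.exists_bound_of_continuousOn hQc
  obtain ⟨MA0, hMA0⟩ := isCompact_Icc.exists_bound_of_continuousOn hAc
  obtain ⟨MA'0, hMA'0⟩ := isCompact_Icc.exists_bound_of_continuousOn hA'cont
  set MQ := max MQ0 0 with hMQdef
  set MA := max MA0 0 with hMAdef
  set MA' := max MA'0 0 with hMA'def
  have hMQ : ∀ t ∈ Icc (0:ℝ) 1, ‖Q t‖ ≤ MQ := fun t ht => (hMQ0 t ht).trans (le_max_left _ _)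
  have hMA : ∀ t ∈ Icc (0:ℝ) 1, ‖A t‖ ≤ MA := fun t ht => (hMA0 t ht).trans (le_max_left _ _)
  have hMA' : ∀ t ∈ Icc (0:ℝ) 1, ‖A' t‖ ≤ MA' := fun t ht => (hMA'0 t ht).trans (le_max_left _ _)
  have hMQ0' : 0 ≤ MQ := le_max_right _ _
  have hMA0' : 0 ≤ MA := le_max_right _ _
  have hMA'0' : 0 ≤ MA' := le_max_right _ _
  set c : ℝ := (p : ℝ) with hcdef
  have hc : 0 ≤ c := Nat.cast_nonneg _
  -- derivative of G = Q * A
  set G : ℝ → Matrix (Fin p) (Fin p) ℝ := fun t => Q t * A t with hGdef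
  set G' : ℝ → Matrix (Fin p) (Fin p) ℝ :=
    fun t => Q t * A t * A t + Q t * A' t with hG'def
  have hG : ∀ t ∈ Icc (0:ℝ) 1, HasDerivAt G (G' t) t := by
    intro t ht
    letI i1 : NormedAddCommGroup (Matrix (Fin p) (Fin p) ℝ →L[ℝ] Matrix (Fin p) (Fin p) ℝ) :=
      ContinuousLinearMap.toNormedAddCommGroup
    letI i2 : NormedSpace ℝ (Matrix (Fin p) (Fin p) ℝ →L[ℝ] Matrix (Fin p) (Fin p) ℝ) :=
      ContinuousLinearMap.toNormedSpace
    have h1 : HasDerivAt (fun u => mulCLM p (Q u)) (mulCLM p (Q t * A t)) t :=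
      ((mulCLM p).hasFDerivAt).comp_hasDerivAt t (hQ t ht)
    have h2 := h1.clm_apply (hA t ht)
    exact h2
  set K1 : ℝ := c * (c * MQ * MA) * MA + c * MQ * MA' with hK1def
  have hK1nonneg : 0 ≤ K1 := by positivity
  have hGbound : ∀ t ∈ Icc (0:ℝ) 1, ‖G' t‖ ≤ K1 := by
    intro t ht
    have n1 := hMQ t ht
    have n2 := hMA t ht
    have n3 := hMA' t ht
    have e1 : ‖Q t * A t‖ ≤ c * MQ * MA :=
      (sup_norm_mul_le _ _).trans
        (mul_le_mul (mul_le_mul_of_nonneg_left n1 hc) n2 (norm_nonneg _)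
          (mul_nonneg hc hMQ0'))
    have e2 : ‖Q t * A t * A t‖ ≤ c * (c * MQ * MA) * MA :=
      (sup_norm_mul_le _ _).trans
        (mul_le_mul (mul_le_mul_of_nonneg_left e1 hc) n2 (norm_nonneg _)
          (mul_nonneg hc (mul_nonneg (mul_nonneg hc hMQ0') hMA0')))
    have e3 : ‖Q t * A' t‖ ≤ c * MQ * MA' :=
      (sup_norm_mul_le _ _).trans
        (mul_le_mul (mul_le_mul_of_nonneg_left n1 hc) n3 (norm_nonneg _)
          (mul_nonneg hc hMQ0'))
    calc ‖G' t‖ ≤ ‖Q t * A t * A t‖ + ‖Q t * A' t‖ := norm_add_le _ _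
      _ ≤ K1 := by rw [hK1def]; linarith
  set EB : ℝ := (c * MA) ^ 2 * Real.exp (c * MA) with hEBdef
  have hEBnonneg : 0 ≤ EB := by positivity
  have hpos1 : 0 ≤ c * MQ * MA' := mul_nonneg (mul_nonneg hc hMQ0') hMA'0'
  have hpos2 : 0 ≤ c * MQ * EB := mul_nonneg (mul_nonneg hc hMQ0') hEBnonneg
  refine ⟨K1 + c * MQ * MA' / 2 + c * MQ * EB + 1, by linarith, ?_⟩
  intro s h h0 hs hsh
  have hh1 : h ≤ 1 := by
    have := hs.1; have := hsh.2; linarith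
  have hm : s + h / 2 ∈ Icc (0:ℝ) 1 := ⟨by linarith [hs.1], by linarith [hsh.2]⟩
  set m := s + h / 2 with hmdef
  have hJsub : Icc s (s + h) ⊆ Icc (0:ℝ) 1 := Icc_subset_Icc hs.1 hsh.2
  -- Step A : Taylor bound
  have hGdiff : ∀ t ∈ Icc s (s + h), ‖G t - G s‖ ≤ K1 * h := by
    intro t ht
    have := (convex_Icc s (s+h)).norm_image_sub_le_of_norm_hasDerivWithin_le
      (fun u hu => (hG u (hJsub hu)).hasDerivWithinAt)
      (fun u hu => hGbound u (hJsub hu)) (left_mem_Icc.mpr (by linarith)) ht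
    refine this.trans ?_
    rw [Real.norm_eq_abs, abs_of_nonneg (by linarith [ht.1])]
    have := ht.2
    nlinarith
  set F : ℝ → Matrix (Fin p) (Fin p) ℝ := fun t => Q t - (t - s) • (Q s * A s) with hFdef
  have hFderiv : ∀ t ∈ Icc s (s + h), HasDerivWithinAt F (G t - G s) (Icc s (s+h)) t := by
    intro t ht
    have h1 : HasDerivAt (fun u : ℝ => (u - s) • (Q s * A s)) ((1:ℝ) • (Q s * A s)) t :=
      ((hasDerivAt_id t).sub_const s).smul_const (Q s * A s)
    have h2 := (hQ t (hJsub ht)).sub h1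
    rw [one_smul] at h2
    exact h2.hasDerivWithinAt
  have hT1 : ‖Q (s+h) - Q s - h • (Q s * A s)‖ ≤ K1 * h ^ 2 := by
    have := (convex_Icc s (s+h)).norm_image_sub_le_of_norm_hasDerivWithin_le
      hFderiv hGdiff (left_mem_Icc.mpr (by linarith)) (right_mem_Icc.mpr (by linarith))
    have hFs : F s = Q s := by simp [hFdef]
    have hFsh : F (s+h) = Q (s+h) - h • (Q s * A s) := by simp [hFdef]
    rw [hFs, hFsh] at this
    have hnorm : ‖s + h - s‖ = h := by
      rw [Real.norm_eq_abs, abs_of_nonneg (by linarith)]; ring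
    rw [hnorm] at this
    calc ‖Q (s+h) - Q s - h • (Q s * A s)‖ = ‖Q (s+h) - h • (Q s * A s) - Q s‖ := by
          rw [sub_right_comm]
      _ ≤ K1 * h * h := this
      _ = K1 * h ^ 2 := by ring
  -- Step B : midpoint shift
  have hAdiff : ‖A m - A s‖ ≤ MA' * (h / 2) := by
    have := (convex_Icc s (s+h)).norm_image_sub_le_of_norm_hasDerivWithin_le
      (fun u hu => (hA u (hJsub hu)).hasDerivWithinAt)
      (fun u hu => hMA' u (hJsub hu)) (left_mem_Icc.mpr (by linarith))
      (⟨by rw [hmdef]; linarith, by rw [hmdef]; linarith⟩ : m ∈ Icc s (s+h))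
    refine this.trans ?_
    rw [hmdef]
    rw [Real.norm_eq_abs, show s + h/2 - s = h/2 by ring, abs_of_nonneg (by linarith)]
  have hT2 : ‖h • (Q s * A s) - h • (Q s * A m)‖ ≤ (c * MQ * MA' / 2) * h ^ 2 := by
    rw [← smul_sub, ← mul_sub, norm_smul, Real.norm_eq_abs, abs_of_nonneg h0]
    have e1 : ‖Q s * (A s - A m)‖ ≤ c * MQ * (MA' * (h/2)) := by
      have e2 : ‖A s - A m‖ ≤ MA' * (h/2) := by rw [norm_sub_rev]; exact hAdiff
      exact (sup_norm_mul_le _ _).trans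
        (mul_le_mul (mul_le_mul_of_nonneg_left (hMQ s hs) hc) e2 (norm_nonneg _)
          (mul_nonneg hc hMQ0'))
    calc h * ‖Q s * (A s - A m)‖ ≤ h * (c * MQ * (MA' * (h/2))) := by
          exact mul_le_mul_of_nonneg_left e1 h0
      _ = (c * MQ * MA' / 2) * h ^ 2 := by ring
  -- Step C : exponential remainder
  set X := h • A m with hXdef
  set E := NormedSpace.exp X - 1 - X with hEdef
  have hXentry : ∀ i j, |X i j| ≤ h * MA := by
    intro i j
    rw [hXdef, Matrix.smul_apply, smul_eq_mul, abs_mul, abs_of_nonneg h0]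
    have : |A m i j| ≤ ‖A m‖ := by
      rw [← Real.norm_eq_abs]; exact norm_entry_le_entrywise_sup_norm _
    exact mul_le_mul_of_nonneg_left (this.trans (hMA m hm)) h0
  have hEentry : ∀ i j, |E i j| ≤ EB * h ^ 2 := by
    intro i j
    have := exp_entry_remainder_bound X (h * MA) (by positivity) hXentry i j
    refine this.trans ?_
    have e1 : Real.exp (c * (h * MA)) ≤ Real.exp (c * MA) := by
      apply Real.exp_le_exp.mpr
      nlinarith [mul_nonneg (mul_nonneg hc hMA0') (sub_nonneg.mpr hh1)]
    calc (c * (h * MA)) ^ 2 * Real.exp (c * (h * MA))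
        = ((c * MA) ^ 2 * h ^ 2) * Real.exp (c * (h * MA)) := by ring
      _ ≤ ((c * MA) ^ 2 * h ^ 2) * Real.exp (c * MA) := by
          exact mul_le_mul_of_nonneg_left e1
            (mul_nonneg (sq_nonneg _) (sq_nonneg _))
      _ = EB * h ^ 2 := by rw [hEBdef]; ring
  have hEnorm : ‖E‖ ≤ EB * h ^ 2 := by
    rw [Matrix.norm_le_iff (mul_nonneg hEBnonneg (sq_nonneg h))]
    intro i j
    rw [Real.norm_eq_abs]
    exact hEentry i j
  have hT3 : ‖Q s * E‖ ≤ c * MQ * EB * h ^ 2 := by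
    refine (sup_norm_mul_le _ _).trans ?_
    calc c * ‖Q s‖ * ‖E‖ ≤ c * MQ * (EB * h ^ 2) :=
          mul_le_mul (mul_le_mul_of_nonneg_left (hMQ s hs) hc) hEnorm (norm_nonneg _)
            (mul_nonneg hc hMQ0')
      _ = c * MQ * EB * h ^ 2 := by ring
  -- decomposition
  have hdecomp : Q (s + h) - Q s * NormedSpace.exp (h • A m) =
      (Q (s+h) - Q s - h • (Q s * A s)) + (h • (Q s * A s) - h • (Q s * A m)) - Q s * E := by
    rw [hEdef, hXdef, mul_sub, mul_sub, mul_one, mul_smul_comm]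
    abel
  calc ‖Q (s + h) - Q s * NormedSpace.exp (h • A (s + h/2))‖
      = ‖(Q (s+h) - Q s - h • (Q s * A s)) + (h • (Q s * A s) - h • (Q s * A m)) - Q s * E‖ := by
        rw [← hdecomp]
    _ ≤ ‖(Q (s+h) - Q s - h • (Q s * A s)) + (h • (Q s * A s) - h • (Q s * A m))‖ + ‖Q s * E‖ :=
        norm_sub_le _ _
    _ ≤ ‖Q (s+h) - Q s - h • (Q s * A s)‖ + ‖h • (Q s * A s) - h • (Q s * A m)‖ + ‖Q s * E‖ := by
        have := norm_add_le (Q (s+h) - Q s - h • (Q s * A s)) (h • (Q s * A s) - h • (Q s * A m))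
        linarith
    _ ≤ K1 * h ^ 2 + (c * MQ * MA' / 2) * h ^ 2 + c * MQ * EB * h ^ 2 :=
        add_le_add (add_le_add hT1 hT2) hT3
    _ ≤ (K1 + c * MQ * MA' / 2 + c * MQ * EB + 1) * h ^ 2 := by nlinarith [sq_nonneg h]
end

section
/- Let X₁, X₂ : [0,L] → ℝ³ be unit-speed C³ curves whose Frenet apparatuses (Tᵢ, κᵢ, Nᵢ, Bᵢ, τᵢ) satisfy κᵢ(s) > 0 and the Frenet-Serret equations Tᵢ' = κᵢNᵢ, Nᵢ' = −κᵢTᵢ + τᵢBᵢ, Bᵢ' = −τᵢNᵢ on [0,L], for i = 1, 2. If κ₁(s) = κ₂(s) and τ₁(s) = τ₂(s) for all s ∈ [0,L], then there exist a vector a ∈ ℝ³ and a rotation matrix R ∈ SO(3) such that X₁(s) = a + R·X₂(s) for all s ∈ [0,L]; moreover R = Q₁(0)·Q₂(0)ᵀ where Qᵢ(s) = [Tᵢ(s) | Nᵢ(s) | Bᵢ(s)] is the Frenet frame matrix. -/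
open Set Matrix
open scoped RealInnerProductSpace InnerProductSpace

/-- Cross product on `EuclideanSpace ℝ (Fin 3)`. -/
noncomputable def cross3 (u v : EuclideanSpace ℝ (Fin 3)) : EuclideanSpace ℝ (Fin 3) :=
  (WithLp.equiv 2 (Fin 3 → ℝ)).symm
    ![u 1 * v 2 - u 2 * v 1, u 2 * v 0 - u 0 * v 2, u 0 * v 1 - u 1 * v 0]

/-- The Frenet frame matrix `Q = [T | N | B]` with columns `T`, `N`, `B`. -/
noncomputable def frameMatrix (T N B : EuclideanSpace ℝ (Fin 3)) :
    Matrix (Fin 3) (Fin 3) ℝ :=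
  Matrix.of fun i j => (![T, N, B] j) i

lemma inner3 (u v : EuclideanSpace ℝ (Fin 3)) : ⟪u, v⟫_ℝ = u 0 * v 0 + u 1 * v 1 + u 2 * v 2 := by
  simp [PiLp.inner_apply, Fin.sum_univ_three, RCLike.inner_apply, conj_trivial]; ring

lemma cross3_0 (u v : EuclideanSpace ℝ (Fin 3)) : cross3 u v 0 = u 1 * v 2 - u 2 * v 1 := rfl
lemma cross3_1 (u v : EuclideanSpace ℝ (Fin 3)) : cross3 u v 1 = u 2 * v 0 - u 0 * v 2 := rfl
lemma cross3_2 (u v : EuclideanSpace ℝ (Fin 3)) : cross3 u v 2 = u 0 * v 1 - u 1 * v 0 := rfl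

/-- orthonormality facts for a Frenet frame at a point -/
lemma ortho_facts (t t' n b : EuclideanSpace ℝ (Fin 3)) (k : ℝ) (hk : 0 < k)
    (hk' : k = ‖t'‖) (ht : ‖t‖ = 1) (hn : n = k⁻¹ • t') (hb : b = cross3 t n)
    (htt' : ⟪t, t'⟫_ℝ = 0) :
    ⟪t,t⟫_ℝ = 1 ∧ ⟪n,n⟫_ℝ = 1 ∧ ⟪b,b⟫_ℝ = 1 ∧ ⟪t,n⟫_ℝ = 0 ∧ ⟪t,b⟫_ℝ = 0 ∧ ⟪n,b⟫_ℝ = 0 := by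
  have htt : ⟪t,t⟫_ℝ = 1 := by
    rw [real_inner_self_eq_norm_sq, ht]; norm_num
  have ht't' : ⟪t',t'⟫_ℝ = k ^ 2 := by
    rw [real_inner_self_eq_norm_sq, hk']
  have hnn : ⟪n,n⟫_ℝ = 1 := by
    rw [hn, real_inner_smul_left, real_inner_smul_right, ht't']
    field_simp
  have htn : ⟪t,n⟫_ℝ = 0 := by
    rw [hn, real_inner_smul_right, htt', mul_zero]
  have htb : ⟪t,b⟫_ℝ = 0 := by
    rw [hb, inner3, cross3_0, cross3_1, cross3_2]; ring
  have hnb : ⟪n,b⟫_ℝ = 0 := by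
    rw [hb, inner3, cross3_0, cross3_1, cross3_2]; ring
  have hbb : ⟪b,b⟫_ℝ = 1 := by
    rw [hb]
    have h1 := inner3 t t; have h2 := inner3 n n; have h3 := inner3 t n
    rw [htt] at h1; rw [hnn] at h2; rw [htn] at h3
    rw [inner3, cross3_0, cross3_1, cross3_2]
    nlinarith [h1, h2, h3]
  exact ⟨htt, hnn, hbb, htn, htb, hnb⟩

lemma frame_SO3 (t n b : EuclideanSpace ℝ (Fin 3))
    (htt : ⟪t,t⟫_ℝ = 1) (hnn : ⟪n,n⟫_ℝ = 1) (hbb : ⟪b,b⟫_ℝ = 1)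
    (htn : ⟪t,n⟫_ℝ = 0) (htb : ⟪t,b⟫_ℝ = 0) (hnb : ⟪n,b⟫_ℝ = 0)
    (hb : b = cross3 t n) :
    (frameMatrix t n b)ᵀ * frameMatrix t n b = 1 ∧ (frameMatrix t n b).det = 1 := by
  rw [inner3] at htt hnn hbb htn htb hnb
  constructor
  · ext i j
    fin_cases i <;> fin_cases j <;>
      simp [Matrix.mul_apply, frameMatrix, Fin.sum_univ_three, Matrix.one_apply] <;>
      first
        | linear_combination htt
        | linear_combination hnn
        | linear_combination hbb
        | linear_combination htn
        | linear_combination htb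
        | linear_combination hnb
  · subst hb
    rw [cross3_0, cross3_1, cross3_2] at hbb
    simp only [Matrix.det_fin_three, frameMatrix, Matrix.of_apply, Matrix.cons_val_zero,
      Matrix.cons_val_one, Matrix.head_cons, Matrix.cons_val_two, Matrix.tail_cons,
      cross3_0, cross3_1, cross3_2]
    linear_combination hbb

/-- Two unit-speed C³ curves with the same (positive) curvature
and the same torsion are equal up to a rigid motion: `X₁ = a + R·X₂` for some
`a ∈ ℝ³` and `R ∈ SO(3)`, and moreover `R = Q₁(0)·Q₂(0)ᵀ` where
`Qᵢ(s) = [Tᵢ(s) | Nᵢ(s) | Bᵢ(s)]` are the Frenet frame matrices. -/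
theorem congruence_of_equal_curvature_torsion
    (L : ℝ) (hL : 0 < L)
    (X₁ T₁ T₁' N₁ N₁' B₁ B₁' : ℝ → EuclideanSpace ℝ (Fin 3)) (κ₁ τ₁ : ℝ → ℝ)
    (X₂ T₂ T₂' N₂ N₂' B₂ B₂' : ℝ → EuclideanSpace ℝ (Fin 3)) (κ₂ τ₂ : ℝ → ℝ)
    -- Frenet apparatus of X₁
    (hXT₁ : ∀ s ∈ Icc (0 : ℝ) L, HasDerivAt X₁ (T₁ s) s)
    (hTT₁ : ∀ s ∈ Icc (0 : ℝ) L, HasDerivAt T₁ (T₁' s) s)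
    (hunit₁ : ∀ s ∈ Icc (0 : ℝ) L, ‖T₁ s‖ = 1)
    (hκ₁ : ∀ s ∈ Icc (0 : ℝ) L, κ₁ s = ‖T₁' s‖)
    (hκpos₁ : ∀ s ∈ Icc (0 : ℝ) L, 0 < κ₁ s)
    (hN₁ : ∀ s ∈ Icc (0 : ℝ) L, N₁ s = (κ₁ s)⁻¹ • T₁' s)
    (hNN₁ : ∀ s ∈ Icc (0 : ℝ) L, HasDerivAt N₁ (N₁' s) s)
    (hB₁ : ∀ s ∈ Icc (0 : ℝ) L, B₁ s = cross3 (T₁ s) (N₁ s))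
    (hBB₁ : ∀ s ∈ Icc (0 : ℝ) L, HasDerivAt B₁ (B₁' s) s)
    -- Frenet-Serret equations for X₁
    (hFS₁a : ∀ s ∈ Icc (0 : ℝ) L, T₁' s = κ₁ s • N₁ s)
    (hFS₁b : ∀ s ∈ Icc (0 : ℝ) L, N₁' s = -(κ₁ s) • T₁ s + τ₁ s • B₁ s)
    (hFS₁c : ∀ s ∈ Icc (0 : ℝ) L, B₁' s = -(τ₁ s) • N₁ s)
    -- Frenet apparatus of X₂
    (hXT₂ : ∀ s ∈ Icc (0 : ℝ) L, HasDerivAt X₂ (T₂ s) s)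
    (hTT₂ : ∀ s ∈ Icc (0 : ℝ) L, HasDerivAt T₂ (T₂' s) s)
    (hunit₂ : ∀ s ∈ Icc (0 : ℝ) L, ‖T₂ s‖ = 1)
    (hκ₂ : ∀ s ∈ Icc (0 : ℝ) L, κ₂ s = ‖T₂' s‖)
    (hκpos₂ : ∀ s ∈ Icc (0 : ℝ) L, 0 < κ₂ s)
    (hN₂ : ∀ s ∈ Icc (0 : ℝ) L, N₂ s = (κ₂ s)⁻¹ • T₂' s)
    (hNN₂ : ∀ s ∈ Icc (0 : ℝ) L, HasDerivAt N₂ (N₂' s) s)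
    (hB₂ : ∀ s ∈ Icc (0 : ℝ) L, B₂ s = cross3 (T₂ s) (N₂ s))
    (hBB₂ : ∀ s ∈ Icc (0 : ℝ) L, HasDerivAt B₂ (B₂' s) s)
    -- Frenet-Serret equations for X₂
    (hFS₂a : ∀ s ∈ Icc (0 : ℝ) L, T₂' s = κ₂ s • N₂ s)
    (hFS₂b : ∀ s ∈ Icc (0 : ℝ) L, N₂' s = -(κ₂ s) • T₂ s + τ₂ s • B₂ s)
    (hFS₂c : ∀ s ∈ Icc (0 : ℝ) L, B₂' s = -(τ₂ s) • N₂ s)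
    -- equal curvature and torsion
    (hκeq : ∀ s ∈ Icc (0 : ℝ) L, κ₁ s = κ₂ s)
    (hτeq : ∀ s ∈ Icc (0 : ℝ) L, τ₁ s = τ₂ s) :
    ∃ (a : EuclideanSpace ℝ (Fin 3)) (R : Matrix (Fin 3) (Fin 3) ℝ),
      Rᵀ * R = 1 ∧ R.det = 1 ∧
      (∀ s ∈ Icc (0 : ℝ) L, X₁ s = a + Matrix.toEuclideanLin R (X₂ s)) ∧
      R = frameMatrix (T₁ 0) (N₁ 0) (B₁ 0) * (frameMatrix (T₂ 0) (N₂ 0) (B₂ 0))ᵀ := by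
  have h0 : (0:ℝ) ∈ Icc (0:ℝ) L := ⟨le_refl 0, hL.le⟩
  -- ⟪T 0, T' 0⟫ = 0 from the unit-speed condition
  have key : ∀ (T T' : ℝ → EuclideanSpace ℝ (Fin 3)),
      (∀ s ∈ Icc (0:ℝ) L, HasDerivAt T (T' s) s) →
      (∀ s ∈ Icc (0:ℝ) L, ‖T s‖ = 1) → ⟪T 0, T' 0⟫_ℝ = 0 := by
    intro T T' hT hu
    have hud : UniqueDiffWithinAt ℝ (Icc (0:ℝ) L) 0 := (uniqueDiffOn_Icc hL) 0 h0
    have h1 : HasDerivWithinAt (fun s => ⟪T s, T s⟫_ℝ)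
        (⟪T 0, T' 0⟫_ℝ + ⟪T' 0, T 0⟫_ℝ) (Icc (0:ℝ) L) 0 :=
      ((hT 0 h0).inner ℝ (hT 0 h0)).hasDerivWithinAt
    have hone : ∀ s ∈ Icc (0:ℝ) L, ⟪T s, T s⟫_ℝ = 1 := fun s hs => by
      rw [real_inner_self_eq_norm_sq, hu s hs]; norm_num
    have h2 : HasDerivWithinAt (fun s => ⟪T s, T s⟫_ℝ) 0 (Icc (0:ℝ) L) 0 :=
      (hasDerivWithinAt_const (0:ℝ) (Icc (0:ℝ) L) (1:ℝ)).congr hone (hone 0 h0)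
    have heq : ⟪T 0, T' 0⟫_ℝ + ⟪T' 0, T 0⟫_ℝ = 0 :=
      (h1.derivWithin hud).symm.trans (h2.derivWithin hud)
    have hc := real_inner_comm (T 0) (T' 0)
    linarith
  obtain ⟨htt1, hnn1, hbb1, htn1, htb1, hnb1⟩ :=
    ortho_facts (T₁ 0) (T₁' 0) (N₁ 0) (B₁ 0) (κ₁ 0) (hκpos₁ 0 h0) (hκ₁ 0 h0)
      (hunit₁ 0 h0) (hN₁ 0 h0) (hB₁ 0 h0) (key T₁ T₁' hTT₁ hunit₁)
  obtain ⟨htt2, hnn2, hbb2, htn2, htb2, hnb2⟩ :=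
    ortho_facts (T₂ 0) (T₂' 0) (N₂ 0) (B₂ 0) (κ₂ 0) (hκpos₂ 0 h0) (hκ₂ 0 h0)
      (hunit₂ 0 h0) (hN₂ 0 h0) (hB₂ 0 h0) (key T₂ T₂' hTT₂ hunit₂)
  set Q₁ : Matrix (Fin 3) (Fin 3) ℝ := frameMatrix (T₁ 0) (N₁ 0) (B₁ 0) with hQ₁def
  set Q₂ : Matrix (Fin 3) (Fin 3) ℝ := frameMatrix (T₂ 0) (N₂ 0) (B₂ 0) with hQ₂def
  obtain ⟨hQ₁o, hQ₁d⟩ := frame_SO3 _ _ _ htt1 hnn1 hbb1 htn1 htb1 hnb1 (hB₁ 0 h0)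
  obtain ⟨hQ₂o, hQ₂d⟩ := frame_SO3 _ _ _ htt2 hnn2 hbb2 htn2 htb2 hnb2 (hB₂ 0 h0)
  set R : Matrix (Fin 3) (Fin 3) ℝ := Q₁ * Q₂ᵀ with hRdef
  have hQ₂o' : Q₂ * Q₂ᵀ = 1 := mul_eq_one_comm.mp hQ₂o
  have hRtR : Rᵀ * R = 1 := by
    rw [hRdef, transpose_mul, transpose_transpose, Matrix.mul_assoc,
      ← Matrix.mul_assoc Q₁ᵀ Q₁ Q₂ᵀ, hQ₁o, Matrix.one_mul, hQ₂o']
  have hRdet : R.det = 1 := by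
    rw [hRdef, det_mul, det_transpose, hQ₁d, hQ₂d, mul_one]
  have hRQ : R * Q₂ = Q₁ := by
    rw [hRdef, Matrix.mul_assoc, hQ₂o, Matrix.mul_one]
  set ρ : EuclideanSpace ℝ (Fin 3) →L[ℝ] EuclideanSpace ℝ (Fin 3) :=
    LinearMap.toContinuousLinearMap (Matrix.toEuclideanLin R) with hρdef
  have hρapp : ∀ (v : EuclideanSpace ℝ (Fin 3)) (i : Fin 3), ρ v i = ∑ j, R i j * v j :=
    fun v i => rfl
  -- the rotated frame at 0 agrees with frame 1
  have hcol : ∀ (j : Fin 3) (i : Fin 3), (R * Q₂) i j = Q₁ i j := fun j i =>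
    congrFun (congrFun hRQ i) j
  have hρT : ρ (T₂ 0) = T₁ 0 := by
    ext i
    rw [hρapp]
    have h := hcol 0 i
    simpa [Matrix.mul_apply, frameMatrix, hQ₁def, hQ₂def] using h
  have hρN : ρ (N₂ 0) = N₁ 0 := by
    ext i
    rw [hρapp]
    have h := hcol 1 i
    simpa [Matrix.mul_apply, frameMatrix, hQ₁def, hQ₂def] using h
  have hρB : ρ (B₂ 0) = B₁ 0 := by
    ext i
    rw [hρapp]
    have h := hcol 2 i
    simpa [Matrix.mul_apply, frameMatrix, hQ₁def, hQ₂def] using h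
  -- differences
  set a₁ : ℝ → EuclideanSpace ℝ (Fin 3) := fun s => T₁ s - ρ (T₂ s) with ha₁def
  set a₂ : ℝ → EuclideanSpace ℝ (Fin 3) := fun s => N₁ s - ρ (N₂ s) with ha₂def
  set a₃ : ℝ → EuclideanSpace ℝ (Fin 3) := fun s => B₁ s - ρ (B₂ s) with ha₃def
  have da₁ : ∀ s ∈ Icc (0:ℝ) L, HasDerivAt a₁ (κ₁ s • a₂ s) s := by
    intro s hs
    have h := (hTT₁ s hs).sub ((ρ.hasFDerivAt).comp_hasDerivAt s (hTT₂ s hs))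
    have e : T₁' s - ρ (T₂' s) = κ₁ s • a₂ s := by
      rw [hFS₁a s hs, hFS₂a s hs, ← hκeq s hs, _root_.map_smul, ha₂def, smul_sub]
    exact e ▸ h
  have da₂ : ∀ s ∈ Icc (0:ℝ) L, HasDerivAt a₂ (-(κ₁ s) • a₁ s + τ₁ s • a₃ s) s := by
    intro s hs
    have h := (hNN₁ s hs).sub ((ρ.hasFDerivAt).comp_hasDerivAt s (hNN₂ s hs))
    have e : N₁' s - ρ (N₂' s) = -(κ₁ s) • a₁ s + τ₁ s • a₃ s := by
      rw [hFS₁b s hs, hFS₂b s hs, ← hκeq s hs, ← hτeq s hs, _root_.map_add, _root_.map_smul, _root_.map_smul,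
        ha₁def, ha₃def, smul_sub, smul_sub]
      abel
    exact e ▸ h
  have da₃ : ∀ s ∈ Icc (0:ℝ) L, HasDerivAt a₃ (-(τ₁ s) • a₂ s) s := by
    intro s hs
    have h := (hBB₁ s hs).sub ((ρ.hasFDerivAt).comp_hasDerivAt s (hBB₂ s hs))
    have e : B₁' s - ρ (B₂' s) = -(τ₁ s) • a₂ s := by
      rw [hFS₁c s hs, hFS₂c s hs, ← hτeq s hs, _root_.map_smul, ha₂def, smul_sub]
    exact e ▸ h
  set g : ℝ → ℝ := fun s => ⟪a₁ s, a₁ s⟫_ℝ + ⟪a₂ s, a₂ s⟫_ℝ + ⟪a₃ s, a₃ s⟫_ℝ with hgdef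
  have hg : ∀ s ∈ Icc (0:ℝ) L, HasDerivAt g 0 s := by
    intro s hs
    have H := (((da₁ s hs).inner ℝ (da₁ s hs)).add ((da₂ s hs).inner ℝ (da₂ s hs))).add
      ((da₃ s hs).inner ℝ (da₃ s hs))
    have e : (⟪a₁ s, κ₁ s • a₂ s⟫_ℝ + ⟪κ₁ s • a₂ s, a₁ s⟫_ℝ +
        (⟪a₂ s, -(κ₁ s) • a₁ s + τ₁ s • a₃ s⟫_ℝ + ⟪-(κ₁ s) • a₁ s + τ₁ s • a₃ s, a₂ s⟫_ℝ)) +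
        (⟪a₃ s, -(τ₁ s) • a₂ s⟫_ℝ + ⟪-(τ₁ s) • a₂ s, a₃ s⟫_ℝ) = 0 := by
      simp only [inner_add_left, inner_add_right, real_inner_smul_left, real_inner_smul_right]
      rw [real_inner_comm (a₂ s) (a₁ s), real_inner_comm (a₃ s) (a₂ s)]
      ring
    exact e ▸ H
  have hgcont : ContinuousOn g (Icc (0:ℝ) L) :=
    fun x hx => (hg x hx).continuousAt.continuousWithinAt
  have hgconst : ∀ x ∈ Icc (0:ℝ) L, g x = g 0 :=
    constant_of_has_deriv_right_zero hgcont
      (fun x hx => (hg x (Ico_subset_Icc_self hx)).hasDerivWithinAt)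
  have ha₁0 : a₁ 0 = 0 := by rw [ha₁def]; simp [hρT]
  have ha₂0 : a₂ 0 = 0 := by rw [ha₂def]; simp [hρN]
  have ha₃0 : a₃ 0 = 0 := by rw [ha₃def]; simp [hρB]
  have hg0 : g 0 = 0 := by rw [hgdef]; simp [ha₁0, ha₂0, ha₃0]
  have hzero : ∀ s ∈ Icc (0:ℝ) L, a₁ s = 0 := by
    intro s hs
    have hgs : g s = 0 := (hgconst s hs).trans hg0
    have h1 : (0:ℝ) ≤ ⟪a₁ s, a₁ s⟫_ℝ := real_inner_self_nonneg
    have h2 : (0:ℝ) ≤ ⟪a₂ s, a₂ s⟫_ℝ := real_inner_self_nonneg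
    have h3 : (0:ℝ) ≤ ⟪a₃ s, a₃ s⟫_ℝ := real_inner_self_nonneg
    have : ⟪a₁ s, a₁ s⟫_ℝ = 0 := by
      have := hgs
      rw [hgdef] at this
      simp only at this
      linarith
    exact inner_self_eq_zero.mp this
  -- the curve difference is constant
  set h : ℝ → EuclideanSpace ℝ (Fin 3) := fun s => X₁ s - ρ (X₂ s) with hhdef
  have dh : ∀ s ∈ Icc (0:ℝ) L, HasDerivAt h 0 s := by
    intro s hs
    have hd := (hXT₁ s hs).sub ((ρ.hasFDerivAt).comp_hasDerivAt s (hXT₂ s hs))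
    have e : T₁ s - ρ (T₂ s) = 0 := hzero s hs
    exact e ▸ hd
  have hcont : ContinuousOn h (Icc (0:ℝ) L) :=
    fun x hx => (dh x hx).continuousAt.continuousWithinAt
  have hconst : ∀ x ∈ Icc (0:ℝ) L, h x = h 0 :=
    constant_of_has_deriv_right_zero hcont
      (fun x hx => (dh x (Ico_subset_Icc_self hx)).hasDerivWithinAt)
  refine ⟨h 0, R, hRtR, hRdet, ?_, hRdef⟩
  intro s hs
  have e : X₁ s = h s + ρ (X₂ s) := by rw [hhdef]; simp
  rw [e, hconst s hs]
  rfl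
end
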